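/- Let C be a graph pattern (the consequent of a rule), and let m and m* be mappings with dom(m) = dom(m*) such that m ≤_λ m* (for every variable ?v, m*(?v) = m(?v) or m*(?v) = :λ). Then every instance of the singleton schema whose graph pattern is unpack(m(C)) is also an instance of the singleton schema whose graph pattern is unpack(m*(C)); consequently, the schema obtained by extending a schema S with unpack(m(C)) has no instances beyond those of the schema obtained by extending S with both unpack(m(C)) and unpack(m*(C)), making the mapping m redundant with respect to m* (in the literal-free setting where no no-literal restrictions block the required instantiations). -/
import Mathlib


namespace Triplestore

/-- RDF constants: URIs, literals, and the special fresh constant `:λ`. -/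
inductive Const where
  | uri : String → Const
  | lit : String → Const
  | lambda : Const
deriving DecidableEq

/-- A triple of constants (subject, predicate, object). -/
abbrev Triple := Const × Const × Const

/-- Variables: named variables, plus a supply of fresh variables (indexed by a
triple and a position) used by the `unpack` operation. -/
inductive Var where
  | name : String → Var
  | fresh : Triple → Fin 3 → Var
deriving DecidableEq

/-- An element of a triple pattern: a constant or a variable. -/
inductive Term where
  | c : Const → Term
  | v : Var → Term
deriving DecidableEq

abbrev TriplePattern := Term × Term × Term
abbrev Pattern := Set TriplePattern
abbrev Graph := Set Triple
abbrev Mapping := Var → Const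

def isLit : Const → Prop := fun c => ∃ s, c = Const.lit s
def isUri : Const → Prop := fun c => ∃ s, c = Const.uri s

def Term.isLitTerm : Term → Prop
  | .c k => isLit k
  | .v _ => False

def applyTerm (m : Mapping) : Term → Const
  | .c k => k
  | .v x => m x

def applyTriple (m : Mapping) (t : TriplePattern) : Triple :=
  (applyTerm m t.1, applyTerm m t.2.1, applyTerm m t.2.2)

def applyPattern (m : Mapping) (A : Pattern) : Graph := applyTriple m '' A

/-- Positional access to the elements of a triple pattern. -/
def tpElem (t : TriplePattern) : Fin 3 → Term := ![t.1, t.2.1, t.2.2]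

/-- Positional access to the elements of a triple. -/
def trElem (t : Triple) : Fin 3 → Const := ![t.1, t.2.1, t.2.2]

def termVars : Term → Set Var
  | .c _ => (∅ : Set Var)
  | .v x => {x}

def tripleVars (t : TriplePattern) : Set Var :=
  termVars t.1 ∪ termVars t.2.1 ∪ termVars t.2.2

def patternVars (A : Pattern) : Set Var := ⋃ t ∈ A, tripleVars t

/-- No literal occurs in the pattern. -/
def literalFree (A : Pattern) : Prop := ∀ t ∈ A, ∀ i : Fin 3, ¬ (tpElem t i).isLitTerm

/-- The special constant `:λ` does not occur in the pattern. -/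
def lambdaFree (A : Pattern) : Prop := ∀ t ∈ A, ∀ i : Fin 3, tpElem t i ≠ Term.c Const.lambda

/-- Each variable occurs at most once in the pattern. -/
def varsOnce (A : Pattern) : Prop :=
  ∀ t₁, t₁ ∈ A → ∀ t₂, t₂ ∈ A → ∀ i j : Fin 3, ∀ x : Var,
    tpElem t₁ i = Term.v x → tpElem t₂ j = Term.v x → t₁ = t₂ ∧ i = j

/-- A triplestore schema `⟨S^G, S^Δ, S^∃⟩`: a graph pattern, a no-literal set of
variables and a set of existential constraints (the latter play no role in the
instance semantics used here). -/
structure Schema where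
  graph : Pattern
  noLit : Set Var
  exist : Set (Graph → Prop)

/-- Well-formedness conditions of a triplestore schema: `S^Δ ⊆ vars(S^G)`, each
variable occurs at most once in `S^G`, and the fresh constant `:λ` does not
occur in `S^G`. -/
def Schema.wellFormed (S : Schema) : Prop :=
  S.noLit ⊆ patternVars S.graph ∧ varsOnce S.graph ∧ lambdaFree S.graph

/-- `t` is obtained from the triple pattern `tp` by substituting its variables
with constants, where variables in the no-literal set `Δ` are substituted only
by non-literals. -/
def tripleInstOf (t : Triple) (tp : TriplePattern) (Δ : Set Var) : Prop :=
  ∃ γ : Mapping, applyTriple γ tp = t ∧ ∀ v ∈ Δ, ¬ isLit (γ v)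

/-- `I` is an instance of the schema `S`. -/
def instanceOf (I : Graph) (S : Schema) : Prop :=
  ∀ t ∈ I, ∃ tp ∈ S.graph, tripleInstOf t tp S.noLit

/-- `I(S)`: the set of instances of the schema `S`. -/
def instances (S : Schema) : Set Graph := {I | instanceOf I S}

/-- An inference rule `r : A → C`. -/
structure Rule where
  ante : Pattern
  cons : Pattern

/-- `⟦A⟧_G`: the set of mappings `m` with `m(A) ⊆ G`. -/
def evals (A : Pattern) (G : Graph) : Set Mapping := {m | applyPattern m A ⊆ G}

def constsOfPattern (A : Pattern) : Set Const :=
  {c | ∃ t ∈ A, ∃ i : Fin 3, tpElem t i = Term.c c}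

/-- The URIs occurring in the schema `S` or in the rule `r`. -/
def urisOf (S : Schema) (r : Rule) : Set Const :=
  {c | isUri c ∧
    c ∈ constsOfPattern S.graph ∪ constsOfPattern r.ante ∪ constsOfPattern r.cons}

/-- The critical instance `C(S,r)`: substitute each variable of `S^G`, in each
position, with every URI occurring in `S` or `r` and with `:λ`. -/
def criticalInstance (S : Schema) (r : Rule) : Graph :=
  {t | ∃ tp ∈ S.graph, ∃ γ : Mapping,
        applyTriple γ tp = t ∧ ∀ v : Var, γ v ∈ urisOf S r ∪ {Const.lambda}}

/-- The mapping sending every variable to `:λ`. -/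
def toLambda : Mapping := fun _ => Const.lambda

/-- The sandbox graph `S(S)`: substitute every variable of `S^G` with `:λ`. -/
def sandbox (S : Schema) : Graph := applyPattern toLambda S.graph

def rewriteTerm (a q : Term) : Prop := q = a ∨ q = Term.c Const.lambda

def rewriteTriple (ta tq : TriplePattern) : Prop :=
  rewriteTerm ta.1 tq.1 ∧ rewriteTerm ta.2.1 tq.2.1 ∧ rewriteTerm ta.2.2 tq.2.2

/-- `q ∈ Q(A)`: `q` is a rewriting of `A`, obtained by replacing any subset of
the elements of `A`'s triple patterns with `:λ`. -/
def isRewriting (A q : Pattern) : Prop :=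
  ∃ f : TriplePattern → TriplePattern,
    (∀ t ∈ A, rewriteTriple t (f t)) ∧ q = f '' A

/-- `⟦Q(A)⟧_G = ⋃_{q ∈ Q(A)} ⟦q⟧_G`. -/
def rewritingEvals (A : Pattern) (G : Graph) : Set Mapping :=
  {m | ∃ q : Pattern, isRewriting A q ∧ m ∈ evals q G}

/-- `unpack` of an element of a triple: replace `:λ` with a fresh variable
(one distinct fresh variable per occurrence). -/
def unpackElem (t : Triple) (i : Fin 3) : Term :=
  if trElem t i = Const.lambda then Term.v (Var.fresh t i) else Term.c (trElem t i)

def unpackTriple (t : Triple) : TriplePattern :=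
  (unpackElem t 0, unpackElem t 1, unpackElem t 2)

/-- `unpack`: replace each occurrence of `:λ` in a graph with a fresh variable. -/
def unpack (G : Graph) : Pattern := unpackTriple '' G

/-- The filtering function removes a mapping if a variable mapped to a literal
occurs in the subject or predicate position of a triple of `A`, or if in some
object position the mapped value is a literal `l` such that no triple pattern
of `S^G` matching the corresponding image triple has `l` or an unconstrained
variable in its object position. -/
def filteredOut (m : Mapping) (A : Pattern) (S : Schema) : Prop :=
  (∃ t ∈ A, ∃ x : Var, (t.1 = Term.v x ∨ t.2.1 = Term.v x) ∧ isLit (m x)) ∨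
  (∃ t ∈ A, isLit (applyTerm m t.2.2) ∧
     ¬ ∃ tp ∈ S.graph, (∃ γ : Mapping, applyTriple γ tp = applyTriple m t) ∧
        (tp.2.2 = Term.c (applyTerm m t.2.2) ∨
         ∃ x : Var, tp.2.2 = Term.v x ∧ x ∉ S.noLit))

/-- `Ω(M, A, S)`: the subset of the mappings of `M` not filtered out. -/
def omegaFilter (M : Set Mapping) (A : Pattern) (S : Schema) : Set Mapping :=
  {m ∈ M | ¬ filteredOut m A S}

/-- Post-processing shared by both approaches: extend the schema with
`unpack(m(C))`, and its (fresh) variables, for every mapping `m ∈ M`. -/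
def extendSchema (S : Schema) (M : Set Mapping) (C : Pattern) : Schema :=
  { graph := S.graph ∪ ⋃ m ∈ M, unpack (applyPattern m C)
    noLit := S.noLit ∪ ⋃ m ∈ M, patternVars (unpack (applyPattern m C))
    exist := S.exist }

/-- The `score` approach: use the mappings of the rewritings of `A` into the
sandbox graph, post-processed by the filtering function `Ω`. -/
def score (S : Schema) (r : Rule) : Schema :=
  extendSchema S (omegaFilter (rewritingEvals r.ante (sandbox S)) r.ante S) r.cons

/-- The critical-instance approach: use the mappings of `A` into the critical
instance, post-processed by the filtering function `Ω`. -/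
def critical (S : Schema) (r : Rule) : Schema :=
  extendSchema S (omegaFilter (evals r.ante (criticalInstance S r)) r.ante S) r.cons

/-- The triples derivable by one application of `r` to some instance of `S`. -/
def derivedTriples (S : Schema) (r : Rule) : Set Triple :=
  {t | ∃ I ∈ instances S, ∃ m : Mapping,
        applyPattern m r.ante ⊆ I ∧ t ∈ applyPattern m r.cons}

/-- `T` is a schema consequence `r(S)`: it extends `S`, the single-triple
instances of `T ∖ S` are exactly the triples derivable by one application of
`r` to an instance of `S`, and the instances of `T` are exactly the graphs
consisting of such derivable triples together with triples allowed by the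
original schema. -/
def isSchemaConsequence (S : Schema) (r : Rule) (T : Schema) : Prop :=
  S.graph ⊆ T.graph ∧ S.noLit ⊆ T.noLit ∧ T.exist = S.exist ∧
  (∀ t : Triple, t ∈ derivedTriples S r ↔
      instanceOf {t} ⟨T.graph \ S.graph, T.noLit, T.exist⟩) ∧
  (∀ I : Graph, instanceOf I T ↔
      ∀ t ∈ I, instanceOf {t} S ∨ t ∈ derivedTriples S r)

/-- `m ≤_λ m*`: the mapping `m*` is more general than `m`. -/
def moreGeneral (m mstar : Mapping) : Prop :=
  ∀ v : Var, mstar v = m v ∨ mstar v = Const.lambda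

/-- Instance of a bare graph pattern (no no-literal restrictions). -/
def instOfPattern (I : Graph) (G : Pattern) : Prop :=
  ∀ t ∈ I, ∃ tp ∈ G, ∃ γ : Mapping, applyTriple γ tp = t


lemma trElem_applyTriple (m : Mapping) (tp : TriplePattern) (i : Fin 3) :
    trElem (applyTriple m tp) i = applyTerm m (tpElem tp i) := by
  fin_cases i <;> rfl

lemma key_transfer (m mstar : Mapping) (hgen : moreGeneral m mstar)
    (tp : TriplePattern) (t : Triple) (γ : Mapping)
    (h : applyTriple γ (unpackTriple (applyTriple m tp)) = t) :
    ∃ γ', applyTriple γ' (unpackTriple (applyTriple mstar tp)) = t := by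
  set a := applyTriple m tp with ha
  set b := applyTriple mstar tp with hb
  refine ⟨fun v => match v with | .fresh _ i => trElem t i | .name _ => Const.lambda, ?_⟩
  have hpt : ∀ i : Fin 3, applyTerm γ (unpackElem a i) = trElem t i := by
    intro i; rw [← h]; fin_cases i <;> rfl
  have hab : ∀ i : Fin 3, trElem b i ≠ Const.lambda → trElem a i = trElem b i := by
    intro i hi
    rw [trElem_applyTriple, trElem_applyTriple]
    cases htp : tpElem tp i with
    | c k => rfl
    | v x =>
      have : trElem b i = mstar x := by rw [trElem_applyTriple, htp]; rfl
      rcases hgen x with hx | hx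
      · simp [applyTerm, hx]
      · exact absurd (this.trans hx) hi
  have hc : ∀ i : Fin 3,
      applyTerm (fun v => match v with
        | .fresh _ i => trElem t i | .name _ => Const.lambda) (unpackElem b i)
      = trElem t i := by
    intro i
    by_cases hl : trElem b i = Const.lambda
    · simp [unpackElem, hl, applyTerm]
    · have hai : trElem a i = trElem b i := hab i hl
      have := hpt i
      rw [unpackElem, if_neg (by rw [hai]; exact hl)] at this
      simp only [unpackElem, if_neg hl, applyTerm]
      rw [← hai]
      exact this
  exact Prod.ext (hc 0) (Prod.ext (hc 1) (hc 2))

lemma unpack_mono (m mstar : Mapping) (hgen : moreGeneral m mstar) (C : Pattern)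
    (t : Triple) (h : ∃ tp ∈ unpack (applyPattern m C), ∃ γ : Mapping, applyTriple γ tp = t) :
    ∃ tp ∈ unpack (applyPattern mstar C), ∃ γ : Mapping, applyTriple γ tp = t := by
  obtain ⟨tp, htp, γ, hγ⟩ := h
  obtain ⟨tr, ⟨tp₀, htp₀, rfl⟩, rfl⟩ := htp
  obtain ⟨γ', hγ'⟩ := key_transfer m mstar hgen tp₀ t γ hγ
  exact ⟨unpackTriple (applyTriple mstar tp₀),
    ⟨applyTriple mstar tp₀, ⟨tp₀, htp₀, rfl⟩, rfl⟩, γ', hγ'⟩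

/-- If `m ≤_λ m*`, then every instance of the singleton schema `unpack(m(C))`
is an instance of `unpack(m*(C))`; consequently extending a schema with
`unpack(m(C))` yields no instances beyond extending it with both patterns, and
`m` is redundant with respect to `m*` (literal-free setting). -/
theorem redundancy_of_less_general (C : Pattern) (m mstar : Mapping)
    (hlam : lambdaFree C) (hgen : moreGeneral m mstar) :
    (∀ I : Graph, instOfPattern I (unpack (applyPattern m C)) →
        instOfPattern I (unpack (applyPattern mstar C))) ∧
    (∀ (SG : Pattern) (I : Graph),
        instOfPattern I (SG ∪ unpack (applyPattern m C)) →
        instOfPattern I (SG ∪ unpack (applyPattern m C) ∪ unpack (applyPattern mstar C))) ∧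
    (∀ (SG : Pattern) (I : Graph),
        instOfPattern I (SG ∪ unpack (applyPattern m C) ∪ unpack (applyPattern mstar C)) ↔
        instOfPattern I (SG ∪ unpack (applyPattern mstar C))) := by
  have main : ∀ I : Graph, instOfPattern I (unpack (applyPattern m C)) →
      instOfPattern I (unpack (applyPattern mstar C)) := by
    intro I hI t ht
    exact unpack_mono m mstar hgen C t (hI t ht)
  refine ⟨main, ?_, ?_⟩
  · intro SG I hI t ht
    obtain ⟨tp, htp, hw⟩ := hI t ht
    rcases htp with h | h
    · exact ⟨tp, Or.inl (Or.inl h), hw⟩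
    · exact ⟨tp, Or.inl (Or.inr h), hw⟩
  · intro SG I
    constructor
    · intro hI t ht
      obtain ⟨tp, htp, hw⟩ := hI t ht
      rcases htp with (h | h) | h
      · exact ⟨tp, Or.inl h, hw⟩
      · obtain ⟨tp', h', hw'⟩ := unpack_mono m mstar hgen C t ⟨tp, h, hw⟩
        exact ⟨tp', Or.inr h', hw'⟩
      · exact ⟨tp, Or.inr h, hw⟩
    · intro hI t ht
      obtain ⟨tp, htp, hw⟩ := hI t ht
      rcases htp with h | h
      · exact ⟨tp, Or.inl (Or.inl h), hw⟩
      · exact ⟨tp, Or.inr h, hw⟩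

end Triplestore
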